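/- Let Φ : (0,∞) → ℝ be integrable and of bounded variation, with total variation ‖Φ‖_BV over (0,∞). Then for every ε > 0, | Σ_{k=1}^∞ ε Φ(εk) − ∫₀^∞ Φ(t) dt | ≤ ε ‖Φ‖_BV (in particular the series converges absolutely). -/

import Mathlib

open MeasureTheory

set_option maxHeartbeats 1000000 in

/-- Riemann-sum approximation for an integrable function of bounded variation on `(0,∞)`:
`|Σ_{k≥1} ε Φ(εk) - ∫₀^∞ Φ(t) dt| ≤ ε ‖Φ‖_BV`, the series converging absolutely. -/
theorem stmt_14 (Φ : ℝ → ℝ) (hint : IntegrableOn Φ (Set.Ioi 0))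
    (hBV : eVariationOn Φ (Set.Ioi 0) ≠ ⊤) (ε : ℝ) (hε : 0 < ε) :
    Summable (fun k : ℕ => |ε * Φ (ε * ((k : ℝ) + 1))|) ∧
    |(∑' k : ℕ, ε * Φ (ε * ((k : ℝ) + 1))) - ∫ t in Set.Ioi (0 : ℝ), Φ t| ≤
      ε * (eVariationOn Φ (Set.Ioi 0)).toReal := by
  set I : ℕ → Set ℝ := fun k => Set.Ioc (ε * k) (ε * (k + 1)) with hI
  set Vk : ℕ → ENNReal := fun k => eVariationOn Φ (I k) with hVk
  have hlt : ∀ k : ℕ, ε * (k : ℝ) < ε * ((k : ℝ) + 1) := by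
    intro k; nlinarith
  have hIsub : ∀ k, I k ⊆ Set.Ioi 0 := by
    intro k x hx
    have h0 : (0:ℝ) ≤ ε * k := by positivity
    exact lt_of_le_of_lt h0 hx.1
  -- union is Ioi 0
  have hUnion : (⋃ k, I k) = Set.Ioi 0 := by
    apply Set.Subset.antisymm
    · exact Set.iUnion_subset hIsub
    · intro x hx
      have hx0 : (0:ℝ) < x := hx
      have hxε : 0 < x / ε := div_pos hx0 hε
      obtain ⟨n, hn⟩ : ∃ n : ℕ, (n : ℝ) < x / ε ∧ x / ε ≤ (n : ℝ) + 1 := by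
        refine ⟨⌈x / ε⌉₊ - 1, ?_, ?_⟩
        · have h1 : 1 ≤ ⌈x / ε⌉₊ := Nat.one_le_ceil_iff.2 hxε
          have h2 : (⌈x / ε⌉₊ : ℝ) < x / ε + 1 := Nat.ceil_lt_add_one hxε.le
          have : ((⌈x / ε⌉₊ - 1 : ℕ) : ℝ) = (⌈x / ε⌉₊ : ℝ) - 1 := by
            push_cast [h1]; ring
          rw [this]; linarith
        · have h1 : 1 ≤ ⌈x / ε⌉₊ := Nat.one_le_ceil_iff.2 hxε
          have : ((⌈x / ε⌉₊ - 1 : ℕ) : ℝ) + 1 = (⌈x / ε⌉₊ : ℝ) := by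
            push_cast [h1]; ring
          rw [this]; exact Nat.le_ceil _
      refine Set.mem_iUnion.2 ⟨n, ?_, ?_⟩
      · calc ε * n < ε * (x / ε) := by
              exact (mul_lt_mul_iff_right₀ hε).2 hn.1
          _ = x := by field_simp
      · calc x = ε * (x / ε) := by field_simp
          _ ≤ ε * (n + 1) := (mul_le_mul_iff_right₀ hε).2 hn.2
  -- sum of variations on pieces bounded by total variation
  have hpartial : ∀ n : ℕ, ∑ k ∈ Finset.range n, Vk k ≤
      eVariationOn Φ (Set.Ioc 0 (ε * n)) := by
    intro n
    induction n with
    | zero => simp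
    | succ n ih =>
        rw [Finset.sum_range_succ]
        have hadd := eVariationOn.add_le_union Φ (s := Set.Ioc 0 (ε * n))
          (t := I n) (by
            intro x hx y hy
            exact hx.2.trans hy.1.le)
        have hun : Set.Ioc (0:ℝ) (ε * n) ∪ I n = Set.Ioc 0 (ε * (n + 1)) := by
          rw [hI]
          refine Set.Ioc_union_Ioc_eq_Ioc ?_ (hlt n).le
          positivity
        rw [hun] at hadd
        push_cast
        exact le_trans (add_le_add ih le_rfl) hadd
  have htsumV : ∑' k, Vk k ≤ eVariationOn Φ (Set.Ioi 0) := by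
    refine ENNReal.tsum_le_of_sum_range_le (fun n => ?_)
    exact (hpartial n).trans (eVariationOn.mono Φ Set.Ioc_subset_Ioi_self)
  have hVkfin : ∀ k, Vk k ≠ ⊤ := fun k =>
    ne_top_of_le_ne_top hBV (eVariationOn.mono Φ (hIsub k))
  have htsumVfin : ∑' k, Vk k ≠ ⊤ := ne_top_of_le_ne_top hBV htsumV
  -- pointwise bound on each interval
  have hmem : ∀ k : ℕ, ε * ((k:ℝ) + 1) ∈ I k := fun k => ⟨hlt k, le_rfl⟩
  have hpt : ∀ k : ℕ, ∀ t ∈ I k, |Φ (ε * ((k:ℝ) + 1)) - Φ t| ≤ (Vk k).toReal := by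
    intro k t ht
    have h := eVariationOn.edist_le Φ (hmem k) ht
    have := (ENNReal.toReal_le_toReal (edist_ne_top _ _) (hVkfin k)).2 h
    rwa [edist_dist, ENNReal.toReal_ofReal dist_nonneg, Real.dist_eq] at this
  have hvol : ∀ k : ℕ, volume (I k) = ENNReal.ofReal ε := by
    intro k
    rw [hI]
    simp only [Real.volume_Ioc]
    congr 1; ring
  have hvolr : ∀ k : ℕ, (volume (I k)).toReal = ε := by
    intro k; rw [hvol k, ENNReal.toReal_ofReal hε.le]
  have hintk : ∀ k, IntegrableOn Φ (I k) := fun k => hint.mono_set (hIsub k)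
  -- key estimate per interval
  have hkey : ∀ k : ℕ, |ε * Φ (ε * ((k:ℝ) + 1)) - ∫ t in I k, Φ t| ≤
      ε * (Vk k).toReal := by
    intro k
    have hconst : ∫ t in I k, Φ (ε * ((k:ℝ) + 1)) = ε * Φ (ε * ((k:ℝ) + 1)) := by
      rw [setIntegral_const, smul_eq_mul, measureReal_def, hvolr k]
    have hdiff : ε * Φ (ε * ((k:ℝ) + 1)) - ∫ t in I k, Φ t
        = ∫ t in I k, (Φ (ε * ((k:ℝ) + 1)) - Φ t) := by
      rw [integral_sub (integrableOn_const (C := Φ (ε * ((k:ℝ) + 1))) (by rw [hvol k]; exact ENNReal.ofReal_ne_top))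
        (hintk k), hconst]
    rw [hdiff]
    have := norm_setIntegral_le_of_norm_le_const (μ := volume)
      (s := I k) (f := fun t => Φ (ε * ((k:ℝ) + 1)) - Φ t)
      (C := (Vk k).toReal)
      (by rw [hvol k]; exact ENNReal.ofReal_lt_top)
      (fun x hx => by simpa using hpt k x hx)
    rw [measureReal_def, hvolr k] at this
    calc |∫ t in I k, (Φ (ε * ((k:ℝ) + 1)) - Φ t)| ≤ (Vk k).toReal * ε := this
      _ = ε * (Vk k).toReal := mul_comm _ _
  -- HasSum of integrals
  have hmeas : ∀ k, MeasurableSet (I k) := fun k => measurableSet_Ioc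
  have hdisj : Pairwise (Function.onFun Disjoint I) := by
    intro i j hij
    rcases hij.lt_or_gt with h | h
    · refine Set.Ioc_disjoint_Ioc.2 ?_
      refine le_trans (min_le_left _ _) (le_trans ?_ (le_max_right _ _))
      have : (i:ℝ) + 1 ≤ (j:ℝ) := by exact_mod_cast h
      nlinarith
    · refine Set.Ioc_disjoint_Ioc.2 ?_
      refine le_trans (min_le_right _ _) (le_trans ?_ (le_max_left _ _))
      have : (j:ℝ) + 1 ≤ (i:ℝ) := by exact_mod_cast h
      nlinarith
  have hintU : IntegrableOn Φ (⋃ k, I k) := by rw [hUnion]; exact hint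
  have hSumInt : HasSum (fun k => ∫ t in I k, Φ t) (∫ t in Set.Ioi (0:ℝ), Φ t) := by
    have := hasSum_integral_iUnion hmeas hdisj hintU
    rwa [hUnion] at this
  have hintUabs : IntegrableOn (fun t => |Φ t|) (⋃ k, I k) := by
    rw [hUnion]; exact hint.abs
  have hSumIntAbs : HasSum (fun k => ∫ t in I k, |Φ t|) (∫ t in Set.Ioi (0:ℝ), |Φ t|) := by
    have := hasSum_integral_iUnion hmeas hdisj hintUabs
    rwa [hUnion] at this
  -- summability of ε V_k
  have hsumV : Summable (fun k => (Vk k).toReal) := ENNReal.summable_toReal htsumVfin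
  have hsumεV : Summable (fun k => ε * (Vk k).toReal) := hsumV.mul_left ε
  -- summability of the series
  have hsumB : Summable (fun k => (∫ t in I k, |Φ t|) + ε * (Vk k).toReal) :=
    hSumIntAbs.summable.add hsumεV
  have hdom : ∀ k : ℕ, |ε * Φ (ε * ((k:ℝ) + 1))| ≤
      (∫ t in I k, |Φ t|) + ε * (Vk k).toReal := by
    intro k
    have h1 : |∫ t in I k, Φ t| ≤ ∫ t in I k, |Φ t| := by
      simpa using norm_integral_le_integral_norm (μ := volume.restrict (I k)) Φ
    have h2 := hkey k
    calc |ε * Φ (ε * ((k:ℝ) + 1))|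
        ≤ |∫ t in I k, Φ t| + |ε * Φ (ε * ((k:ℝ) + 1)) - ∫ t in I k, Φ t| := by
          have := abs_sub_abs_le_abs_sub (ε * Φ (ε * ((k:ℝ) + 1))) (∫ t in I k, Φ t)
          linarith [abs_nonneg (ε * Φ (ε * ((k:ℝ) + 1)) - ∫ t in I k, Φ t)]
      _ ≤ (∫ t in I k, |Φ t|) + ε * (Vk k).toReal := add_le_add h1 h2
  have hsummable : Summable (fun k : ℕ => |ε * Φ (ε * ((k : ℝ) + 1))|) :=
    Summable.of_nonneg_of_le (fun k => abs_nonneg _) hdom hsumB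
  refine ⟨hsummable, ?_⟩
  have hsum1 : Summable (fun k : ℕ => ε * Φ (ε * ((k : ℝ) + 1))) :=
    hsummable.of_abs
  have hsubsum : Summable (fun k : ℕ => ε * Φ (ε * ((k : ℝ) + 1)) - ∫ t in I k, Φ t) :=
    hsum1.sub hSumInt.summable
  have heq : (∑' k : ℕ, ε * Φ (ε * ((k : ℝ) + 1))) - ∫ t in Set.Ioi (0:ℝ), Φ t
      = ∑' k : ℕ, (ε * Φ (ε * ((k : ℝ) + 1)) - ∫ t in I k, Φ t) := by
    rw [Summable.tsum_sub hsum1 hSumInt.summable, hSumInt.tsum_eq]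
  rw [heq]
  have habs : |∑' k : ℕ, (ε * Φ (ε * ((k : ℝ) + 1)) - ∫ t in I k, Φ t)|
      ≤ ∑' k : ℕ, ε * (Vk k).toReal := by
    have hsumabs : Summable (fun k : ℕ => |ε * Φ (ε * ((k : ℝ) + 1)) - ∫ t in I k, Φ t|) :=
      Summable.of_nonneg_of_le (fun k => abs_nonneg _) (fun k => hkey k) hsumεV
    have h1 : |∑' k : ℕ, (ε * Φ (ε * ((k : ℝ) + 1)) - ∫ t in I k, Φ t)|
        ≤ ∑' k : ℕ, |ε * Φ (ε * ((k : ℝ) + 1)) - ∫ t in I k, Φ t| := by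
      simpa [Real.norm_eq_abs] using
        norm_tsum_le_tsum_norm (f := fun k : ℕ => ε * Φ (ε * ((k : ℝ) + 1)) - ∫ t in I k, Φ t)
          (by simpa [Real.norm_eq_abs] using hsumabs)
    exact h1.trans (Summable.tsum_le_tsum (fun k => hkey k) hsumabs hsumεV)
  refine habs.trans ?_
  rw [tsum_mul_left]
  refine mul_le_mul_of_nonneg_left ?_ hε.le
  rw [← ENNReal.tsum_toReal_eq hVkfin]
  exact ENNReal.toReal_mono hBV htsumV
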